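/- Let w ∈ F (the standard fundamental domain of PSL₂(ℤ)) and set j = (1+i√3)/2, j' = (−1+i√3)/2. Then min over nontrivial γ ∈ PSL₂(ℤ) of ρ(w, γw) is ≫ min{ρ(w,i), ρ(w,j), ρ(w,j'), 1/Im(w)}, with an absolute implied constant. -/

import Mathlib

open UpperHalfPlane
open scoped MatrixGroups

noncomputable def ptJ : UpperHalfPlane :=
  UpperHalfPlane.mk ((1/2 : ℝ) + (Real.sqrt 3 / 2 : ℝ) * Complex.I) (by
    simp only [Complex.add_im, Complex.ofReal_im, Complex.mul_im, Complex.I_im,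
      Complex.ofReal_re, Complex.I_re]
    positivity)

noncomputable def ptJ' : UpperHalfPlane :=
  UpperHalfPlane.mk ((-(1/2) : ℝ) + (Real.sqrt 3 / 2 : ℝ) * Complex.I) (by
    simp only [Complex.add_im, Complex.ofReal_im, Complex.mul_im, Complex.I_im,
      Complex.ofReal_re, Complex.I_re]
    positivity)

lemma msp_dist_smul_formula (γ : SL(2,ℤ)) (w : ℍ) :
    dist w (γ • w) = 2 * Real.arsinh (‖(γ 1 0 : ℂ) * (w:ℂ)^2
      + ((γ 1 1 : ℂ) - (γ 0 0 : ℂ)) * (w:ℂ) - (γ 0 1 : ℂ)‖ / (2 * w.im)) := by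
  set a : ℂ := (γ 0 0 : ℂ) with ha
  set b : ℂ := (γ 0 1 : ℂ) with hb
  set c : ℂ := (γ 1 0 : ℂ) with hc
  set d : ℂ := (γ 1 1 : ℂ) with hd
  have hD0' : denom (γ : GL(2,ℝ)⁺) w ≠ 0 := denom_ne_zero _ w
  have hDeq : denom (γ : GL(2,ℝ)⁺) w = c * (w:ℂ) + d := ModularGroup.denom_apply γ w
  have hD0 : c * (w:ℂ) + d ≠ 0 := hDeq ▸ hD0'
  have hcoe : ((γ • w : ℍ) : ℂ) = (a * (w:ℂ) + b) / (c * (w:ℂ) + d) := by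
    rw [specialLinearGroup_apply]
    rfl
  have him : (γ • w).im = w.im / Complex.normSq (c * (w:ℂ) + d) :=
    (ModularGroup.im_smul_eq_div_normSq γ w).trans (by rw [ModularGroup.denom_apply])
  rw [UpperHalfPlane.dist_eq]
  congr 1
  congr 1
  have hsub : (w:ℂ) - ((γ • w : ℍ) : ℂ)
      = (c * (w:ℂ)^2 + (d - a) * (w:ℂ) - b) / (c * (w:ℂ) + d) := by
    rw [hcoe, sub_div' hD0]; ring
  have habsD : ‖c * (w:ℂ) + d‖ = Real.sqrt (Complex.normSq (c * (w:ℂ) + d)) :=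
    Complex.norm_def _
  have hsq : Real.sqrt (w.im * (γ • w).im) = w.im / ‖c * (w:ℂ) + d‖ := by
    rw [him, habsD]
    rw [show w.im * (w.im / Complex.normSq (c * (w:ℂ) + d))
        = w.im ^ 2 / Complex.normSq (c * (w:ℂ) + d) by ring,
      Real.sqrt_div (sq_nonneg _), Real.sqrt_sq w.im_pos.le]
  have hdistc : dist (w:ℂ) ((γ • w : ℍ) : ℂ)
      = ‖c * (w:ℂ)^2 + (d - a) * (w:ℂ) - b‖ / ‖c * (w:ℂ) + d‖ := by
    rw [Complex.dist_eq, hsub, norm_div]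
  rw [hdistc, hsq]
  have hA : ‖c * (w:ℂ) + d‖ ≠ 0 := by
    simpa [norm_eq_zero] using hD0
  field_simp

lemma msp_sinh_le_lin {t : ℝ} (h0 : 0 ≤ t) (h1 : t ≤ 1/2) : Real.sinh t ≤ (3/2) * t := by
  have he1 : 1 - t ≤ Real.exp (-t) := by
    have := Real.add_one_le_exp (-t); linarith
  have hpos : (0:ℝ) < 1 - t := by linarith
  have he2 : Real.exp t ≤ 1 / (1 - t) := by
    rw [le_div_iff₀ hpos]
    calc Real.exp t * (1 - t) ≤ Real.exp t * Real.exp (-t) :=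
          mul_le_mul_of_nonneg_left he1 (Real.exp_nonneg t)
      _ = 1 := by rw [← Real.exp_add]; simp
  rw [Real.sinh_eq]
  have hch : Real.exp t - Real.exp (-t) ≤ 1/(1-t) - (1 - t) := by linarith
  have h2 : 1/(1-t) - (1-t) = t*(2-t)/(1-t) := by field_simp; ring
  rw [h2] at hch
  have h3 : t*(2-t)/(1-t) ≤ 3*t := by
    rw [div_le_iff₀ hpos]; nlinarith
  linarith

lemma msp_arsinh_le_self {x : ℝ} (hx : 0 ≤ x) : Real.arsinh x ≤ x := by
  have hs : x ≤ Real.sinh x := by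
    rcases eq_or_lt_of_le hx with h | h
    · simp [← h]
    · exact (Real.self_lt_sinh_iff.mpr h).le
  calc Real.arsinh x ≤ Real.arsinh (Real.sinh x) := Real.arsinh_le_arsinh.mpr hs
    _ = x := Real.arsinh_sinh x

lemma msp_factor_quad (a b c d : ℤ) {x₁ y₁ : ℝ}
    (hx : 2*(c:ℝ)*x₁ = (a:ℝ) - d) (hy : (c:ℝ)*(x₁^2+y₁^2) = -(b:ℝ))
    (z : ℂ) :
    (c:ℂ)*z^2 + ((d:ℂ)-(a:ℂ))*z - (b:ℂ)
      = (c:ℂ) * (z - ((x₁:ℂ) + (y₁:ℂ)*Complex.I)) * (z - ((x₁:ℂ) - (y₁:ℂ)*Complex.I)) := by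
  have hxC : 2*(c:ℂ)*(x₁:ℂ) = (a:ℂ) - (d:ℂ) := by exact_mod_cast congrArg (Complex.ofReal) hx
  have hyC : (c:ℂ)*((x₁:ℂ)^2+(y₁:ℂ)^2) = -(b:ℂ) := by
    exact_mod_cast congrArg (Complex.ofReal) hy
  linear_combination z * hxC - hyC + ((c:ℂ)*(y₁:ℂ)^2) * Complex.I_sq

lemma msp_factor_quad_real (a b c d : ℤ) {r₁ r₂ : ℝ}
    (hx : (c:ℝ)*(r₁+r₂) = (a:ℝ) - d) (hy : (c:ℝ)*(r₁*r₂) = -(b:ℝ))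
    (z : ℂ) :
    (c:ℂ)*z^2 + ((d:ℂ)-(a:ℂ))*z - (b:ℂ) = (c:ℂ) * (z - (r₁:ℂ)) * (z - (r₂:ℂ)) := by
  have hxC : (c:ℂ)*((r₁:ℂ)+(r₂:ℂ)) = (a:ℂ) - (d:ℂ) := by
    exact_mod_cast congrArg (Complex.ofReal) hx
  have hyC : (c:ℂ)*((r₁:ℂ)*(r₂:ℂ)) = -(b:ℂ) := by
    exact_mod_cast congrArg (Complex.ofReal) hy
  linear_combination z * hxC - hyC

lemma msp_I_im : (UpperHalfPlane.I).im = 1 := rfl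

/-- The "near an elliptic point" step. -/
lemma msp_near_step (w Z : ℍ) (M X : ℝ) (hZ : 1/2 ≤ Z.im) (hwim : 1/2 ≤ w.im)
    (hM : M ≤ dist w Z) (hX : ‖(w:ℂ) - (Z:ℂ)‖/2 ≤ X) : (3/20)*M ≤ X := by
  have h1 : dist w Z ≤ dist (w:ℂ) (Z:ℂ) / Real.sqrt (w.im * Z.im) :=
    dist_le_dist_coe_div_sqrt w Z
  have h2 : (1:ℝ)/2 ≤ Real.sqrt (w.im * Z.im) := by
    rw [Real.le_sqrt (by norm_num) (by positivity)]
    nlinarith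
  have h3 : dist (w:ℂ) (Z:ℂ) / Real.sqrt (w.im * Z.im) ≤ 2 * dist (w:ℂ) (Z:ℂ) := by
    rw [div_le_iff₀ (by linarith)]
    have : (0:ℝ) ≤ dist (w:ℂ) (Z:ℂ) := dist_nonneg
    nlinarith
  have h4 : M ≤ 2 * ‖(w:ℂ) - (Z:ℂ)‖ := by
    rw [← Complex.dist_eq]; linarith
  have h5 : (0:ℝ) ≤ ‖(w:ℂ) - (Z:ℂ)‖ := norm_nonneg _
  linarith
set_option maxHeartbeats 1600000 in
theorem min_spacing :
    ∃ c > 0, ∀ w ∈ ModularGroup.fd,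
      ∀ γ : Matrix.SpecialLinearGroup (Fin 2) ℤ, γ ≠ 1 → γ ≠ -1 →
        c * min (min (dist w UpperHalfPlane.I) (min (dist w ptJ) (dist w ptJ')))
            (1 / w.im) ≤ dist w (γ • w) := by
  refine ⟨1/5, by norm_num, ?_⟩
  intro w hw γ hγ1 hγm1
  obtain ⟨hw1, hw2⟩ := hw
  have hre := abs_le.mp hw2
  have hnsq : 1 ≤ w.re^2 + w.im^2 := by
    have h := hw1
    rw [Complex.normSq_apply] at h
    simpa [UpperHalfPlane.coe_re, UpperHalfPlane.coe_im, sq] using h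
  have h34 : 3/4 ≤ w.im^2 := by nlinarith
  have him : (43/50:ℝ) ≤ w.im := by nlinarith [w.im_pos]
  have himinv : 1 / w.im ≤ 117/100 := by
    rw [div_le_iff₀ w.im_pos]; nlinarith
  set M := min (min (dist w UpperHalfPlane.I) (min (dist w ptJ) (dist w ptJ')))
      (1 / w.im) with hMdef
  have hM0 : 0 ≤ M :=
    le_min (le_min dist_nonneg (le_min dist_nonneg dist_nonneg)) (by positivity)
  have hMim : M ≤ 1 / w.im := min_le_right _ _
  have hMup : M ≤ 117/100 := hMim.trans himinv
  rw [msp_dist_smul_formula]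
  set aZ := γ 0 0 with haZ
  set bZ := γ 0 1 with hbZ
  set cZ := γ 1 0 with hcZ
  set dZ := γ 1 1 with hdZ
  set P : ℂ := (cZ : ℂ) * (w:ℂ)^2 + ((dZ : ℂ) - (aZ : ℂ)) * (w:ℂ) - (bZ : ℂ) with hPdef
  set X := ‖P‖ / (2 * w.im) with hXdef
  have hX0 : 0 ≤ X := by positivity
  have hdet : aZ * dZ - bZ * cZ = 1 := by
    rw [haZ, hbZ, hcZ, hdZ]
    have h := γ.2
    rw [Matrix.det_fin_two] at h
    exact h
  clear_value M
  clear_value X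
  clear_value P
  clear_value aZ bZ cZ dZ
  suffices hkey : (3/20) * M ≤ X by
    have hsinh : Real.sinh (M/10) ≤ (3/2) * (M/10) :=
      msp_sinh_le_lin (by linarith) (by linarith)
    have h1 : Real.sinh (M/10) ≤ X := by linarith
    have h2 : M/10 ≤ Real.arsinh X := by
      have h3 := Real.arsinh_le_arsinh.mpr h1
      rwa [Real.arsinh_sinh] at h3
    linarith
  have hdetR : (aZ:ℝ) * dZ - bZ * cZ = 1 := by exact_mod_cast hdet
  by_cases hc0 : cZ = 0
  · -- translation case
    rw [hc0, mul_zero, sub_zero] at hdet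
    have hkey2 : bZ ≠ 0 ∧ dZ = aZ := by
      rcases Int.mul_eq_one_iff_eq_one_or_neg_one.mp hdet with ⟨ha, hd⟩ | ⟨ha, hd⟩
      · refine ⟨fun hb => hγ1 ?_, by rw [ha, hd]⟩
        apply Matrix.SpecialLinearGroup.ext; intro i j
        fin_cases i <;> fin_cases j <;>
          simp [show γ 0 0 = 1 from haZ ▸ ha, show γ 0 1 = 0 from hbZ ▸ hb,
            show γ 1 0 = 0 from hcZ ▸ hc0, show γ 1 1 = 1 from hdZ ▸ hd, Matrix.one_apply]
      · refine ⟨fun hb => hγm1 ?_, by rw [ha, hd]⟩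
        apply Matrix.SpecialLinearGroup.ext; intro i j
        fin_cases i <;> fin_cases j <;>
          simp [show γ 0 0 = -1 from haZ ▸ ha, show γ 0 1 = 0 from hbZ ▸ hb,
            show γ 1 0 = 0 from hcZ ▸ hc0, show γ 1 1 = -1 from hdZ ▸ hd, Matrix.one_apply]
    obtain ⟨hb0, hda⟩ := hkey2
    have hPval : P = -(bZ:ℂ) := by
      rw [hPdef, hc0, hda]; push_cast; ring
    have hPabs : (1:ℝ) ≤ ‖P‖ := by
      rw [hPval, norm_neg, Complex.norm_intCast, ← Int.cast_abs]
      exact_mod_cast Int.one_le_abs hb0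
    have h2im : 1/(2*w.im) ≤ X := by
      rw [hXdef, div_le_div_iff₀ (by positivity) (by positivity)]
      nlinarith [w.im_pos]
    have hstep : (3/20:ℝ) * M ≤ 3/20 * (1/w.im) := by nlinarith
    have hfin : (3/20:ℝ) * (1/w.im) ≤ 1/(2*w.im) := by
      have h1 : (0:ℝ) < 1/w.im := by positivity
      rw [show 1/(2*w.im) = (1/2)*(1/w.im) by ring]
      linarith
    linarith
  · have hcR : (cZ:ℝ) ≠ 0 := Int.cast_ne_zero.mpr hc0
    have hcabs : (1:ℝ) ≤ |(cZ:ℝ)| := by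
      rw [← Int.cast_abs]; exact_mod_cast Int.one_le_abs hc0
    have himle : ∀ r : ℝ, w.im ≤ ‖(w:ℂ) - (r:ℂ)‖ := by
      intro r
      have h := Complex.abs_im_le_norm ((w:ℂ) - (r:ℂ))
      rwa [Complex.sub_im, Complex.ofReal_im, sub_zero, UpperHalfPlane.coe_im,
        abs_of_pos w.im_pos] at h
    by_cases hell : (aZ + dZ)^2 ≤ 3
    · -- elliptic case
      have ht4a : 4*(aZ+dZ) ≤ 7 := by nlinarith [hell, sq_nonneg (aZ+dZ-2)]
      have ht4b : -7 ≤ 4*(aZ+dZ) := by nlinarith [hell, sq_nonneg (aZ+dZ+2)]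
      have ht1 : aZ + dZ = -1 ∨ aZ + dZ = 0 ∨ aZ + dZ = 1 := by omega
      have h4t : (0:ℝ) ≤ 4 - ((aZ:ℝ)+dZ)^2 := by
        have h : ((aZ:ℝ)+dZ)^2 ≤ 3 := by exact_mod_cast hell
        linarith
      have habs0 : (0:ℝ) < |(cZ:ℝ)| := by linarith
      set y₁ := Real.sqrt (4 - ((aZ:ℝ)+dZ)^2) / (2*|(cZ:ℝ)|) with hy1def
      set x₁ := ((aZ:ℝ) - dZ) / (2*(cZ:ℝ)) with hx1def
      have hsq : (Real.sqrt (4 - ((aZ:ℝ)+dZ)^2))^2 = 4 - ((aZ:ℝ)+dZ)^2 := Real.sq_sqrt h4t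
      have hsqnn : 0 ≤ Real.sqrt (4 - ((aZ:ℝ)+dZ)^2) := Real.sqrt_nonneg _
      have hy1pos : 0 ≤ y₁ := by rw [hy1def]; positivity
      have hx : 2*(cZ:ℝ)*x₁ = (aZ:ℝ) - dZ := by
        rw [hx1def]; field_simp
      have hy1sq : y₁^2 = (4 - ((aZ:ℝ)+dZ)^2)/(4*(cZ:ℝ)^2) := by
        rw [hy1def, div_pow, hsq, mul_pow, sq_abs]
        norm_num
      have hy : (cZ:ℝ)*(x₁^2+y₁^2) = -(bZ:ℝ) := by
        rw [hy1sq, hx1def]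
        field_simp
        linear_combination (-16) * hdetR
      have hfac := msp_factor_quad aZ bZ cZ dZ hx hy (w:ℂ)
      rw [← hPdef] at hfac
      set p : ℂ := ((x₁:ℝ):ℂ) + ((y₁:ℝ):ℂ)*Complex.I with hpdef
      set q : ℂ := ((x₁:ℝ):ℂ) - ((y₁:ℝ):ℂ)*Complex.I with hqdef
      have hq : w.im ≤ ‖(w:ℂ) - q‖ := by
        have h := Complex.abs_im_le_norm ((w:ℂ) - q)
        have him2 : ((w:ℂ) - q).im = w.im + y₁ := by
          rw [hqdef]
          simp [Complex.sub_im, Complex.add_im, Complex.mul_im, UpperHalfPlane.coe_im]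
        rw [him2] at h
        refine le_trans (le_trans (by linarith) (le_abs_self (w.im + y₁))) h
      have hXlow : ‖(w:ℂ) - p‖/2 ≤ X := by
        rw [hXdef, div_le_div_iff₀ (by norm_num) (by positivity)]
        have hPe : ‖P‖
            = |(cZ:ℝ)| * (‖(w:ℂ) - p‖ * ‖(w:ℂ) - q‖) := by
          rw [hfac, norm_mul, norm_mul, Complex.norm_intCast]; ring
        rw [hPe]
        have hA0 : 0 ≤ ‖(w:ℂ) - p‖ := norm_nonneg _
        have h1 : ‖(w:ℂ) - p‖ * w.im
            ≤ ‖(w:ℂ) - p‖ * ‖(w:ℂ) - q‖ :=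
          mul_le_mul_of_nonneg_left hq hA0
        nlinarith [mul_nonneg hA0 (norm_nonneg ((w:ℂ) - q))]
      by_cases hc2 : 2 ≤ |cZ|
      · -- far: |c| ≥ 2
        have hc2R : (2:ℝ) ≤ |(cZ:ℝ)| := by rw [← Int.cast_abs]; exact_mod_cast hc2
        have hsle : Real.sqrt (4 - ((aZ:ℝ)+dZ)^2) ≤ 2 := by
          rw [show (2:ℝ) = Real.sqrt 4 by
            rw [show (4:ℝ) = 2^2 by norm_num, Real.sqrt_sq (by norm_num : (0:ℝ) ≤ 2)]]
          exact Real.sqrt_le_sqrt (by nlinarith [sq_nonneg ((aZ:ℝ)+dZ)])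
        have hy12 : y₁ ≤ 1/2 := by
          rw [hy1def, div_le_iff₀ (by linarith)]
          linarith
        have himp : ((w:ℂ) - p).im = w.im - y₁ := by
          rw [hpdef]
          simp [Complex.sub_im, Complex.add_im, Complex.mul_im, UpperHalfPlane.coe_im]
        have hlow : w.im - 1/2 ≤ ‖(w:ℂ) - p‖ := by
          have h := Complex.abs_im_le_norm ((w:ℂ) - p)
          rw [himp] at h
          calc w.im - 1/2 ≤ w.im - y₁ := by linarith
            _ ≤ |w.im - y₁| := le_abs_self _
            _ ≤ _ := h
        have hineq : (3/20:ℝ)*(1/w.im) ≤ (w.im - 1/2)/2 := by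
          rw [show (3/20:ℝ)*(1/w.im) = 3/(20*w.im) by ring,
            div_le_div_iff₀ (by positivity) (by norm_num)]
          nlinarith [him, sq_nonneg (w.im - 43/50)]
        have hMs : (3/20:ℝ)*M ≤ (3/20)*(1/w.im) := by linarith
        linarith
      · -- |c| = 1
        have hc1 : cZ = 1 ∨ cZ = -1 := by
          have h0 : 0 ≤ |cZ| := abs_nonneg cZ
          rcases abs_choice cZ with h | h <;> (rw [h] at h0 hc2; omega)
        have hcabs1 : |(cZ:ℝ)| = 1 := by
          rcases hc1 with h | h <;> rw [h] <;> norm_num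
        have hwim12 : (1/2:ℝ) ≤ w.im := by linarith
        by_cases ht0 : aZ + dZ = 0
        · -- order 2, t = 0
          have hy1v : y₁ = 1 := by
            have h0 : ((aZ:ℝ)+dZ)^2 = 0 := by
              have hc : ((aZ:ℝ)+(dZ:ℝ)) = 0 := by exact_mod_cast ht0
              rw [hc]; ring
            rw [hy1def, hcabs1, h0, show (4:ℝ) - 0 = 2^2 by norm_num,
              Real.sqrt_sq (by norm_num : (0:ℝ) ≤ 2)]
            norm_num
          by_cases ha0 : aZ = 0
          · -- near I
            have hx10 : x₁ = 0 := by
              have hd0 : dZ = 0 := by omega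
              rw [hx1def, ha0, hd0]
              norm_num
            have hpval : p = ((UpperHalfPlane.I : ℍ) : ℂ) := by
              rw [hpdef, hx10, hy1v]
              push_cast
              simp
            rw [hpval] at hXlow
            exact msp_near_step w UpperHalfPlane.I M X
              (by rw [msp_I_im]; norm_num) hwim12
              (by rw [hMdef]; exact le_trans (min_le_left _ _) (min_le_left _ _)) hXlow
          · -- far: x₁ nonzero integer
            have hx1v : x₁ = (aZ:ℝ)/(cZ:ℝ) := by
              have hd : (dZ:ℝ) = -(aZ:ℝ) := by exact_mod_cast (by omega : dZ = -aZ)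
              rw [hx1def, hd]
              field_simp
              ring
            have habs1 : (1:ℝ) ≤ |x₁| := by
              rw [hx1v, abs_div, hcabs1, div_one, ← Int.cast_abs]
              exact_mod_cast Int.one_le_abs ha0
            have hrep : ((w:ℂ) - p).re = w.re - x₁ := by
              rw [hpdef]
              simp [Complex.sub_re, Complex.add_re, Complex.mul_re, UpperHalfPlane.coe_re]
            have hlow : (1/2:ℝ) ≤ ‖(w:ℂ) - p‖ := by
              have h := Complex.abs_re_le_norm ((w:ℂ) - p)
              rw [hrep] at h
              have h2 := abs_sub_abs_le_abs_sub x₁ w.re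
              rw [abs_sub_comm] at h2
              linarith
            have hMs : (3/20:ℝ)*M ≤ 1/4 := by linarith
            linarith
        · -- order 3, t = ±1
          have hsq1 : ((aZ:ℝ) + dZ)^2 = 1 := by
            have h : (aZ+dZ)^2 = 1 := by
              rcases ht1 with h|h|h
              · rw [h]; norm_num
              · omega
              · rw [h]; norm_num
            exact_mod_cast h
          have hy1v : y₁ = Real.sqrt 3 / 2 := by
            rw [hy1def, hcabs1, hsq1]
            norm_num
          set m := (aZ - dZ) * cZ with hmdef
          have hx1v : x₁ = (m:ℝ)/2 := by
            rcases hc1 with h | h <;>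
              (rw [hx1def, hmdef, h]; push_cast; field_simp) <;> try ring
          have hmval : m = aZ - dZ ∨ m = -(aZ - dZ) := by
            rcases hc1 with h | h
            · left; rw [hmdef, h]; ring
            · right; rw [hmdef, h]; ring
          have hm3 : m = 1 ∨ m = -1 ∨ (3 ≤ m ∨ m ≤ -3) := by
            rcases hmval with h | h <;> omega
          rcases hm3 with hm | hm | hm
          · -- near ptJ
            have hpval : p = ((ptJ : ℍ) : ℂ) := by
              rw [hpdef, hx1v, hy1v, hm, ptJ, UpperHalfPlane.coe_mk]
              push_cast
              norm_num
            rw [hpval] at hXlow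
            have hJim : (1/2:ℝ) ≤ (ptJ : ℍ).im := by
              have : (ptJ : ℍ).im = Real.sqrt 3 / 2 := by
                simp [ptJ, UpperHalfPlane.coe_im, UpperHalfPlane.mk_im]
              rw [this]
              have : (1:ℝ) ≤ Real.sqrt 3 := by
                rw [show (1:ℝ) = Real.sqrt 1 by simp]
                exact Real.sqrt_le_sqrt (by norm_num)
              linarith
            exact msp_near_step w ptJ M X hJim hwim12
              (by rw [hMdef]; exact le_trans (min_le_left _ _) (le_trans (min_le_right _ _) (min_le_left _ _))) hXlow
          · -- near ptJ'
            have hpval : p = ((ptJ' : ℍ) : ℂ) := by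
              rw [hpdef, hx1v, hy1v, hm, ptJ', UpperHalfPlane.coe_mk]
              push_cast
              norm_num
            rw [hpval] at hXlow
            have hJim : (1/2:ℝ) ≤ (ptJ' : ℍ).im := by
              have : (ptJ' : ℍ).im = Real.sqrt 3 / 2 := by
                simp [ptJ', UpperHalfPlane.coe_im, UpperHalfPlane.mk_im]
              rw [this]
              have : (1:ℝ) ≤ Real.sqrt 3 := by
                rw [show (1:ℝ) = Real.sqrt 1 by simp]
                exact Real.sqrt_le_sqrt (by norm_num)
              linarith
            exact msp_near_step w ptJ' M X hJim hwim12
              (by rw [hMdef]; exact le_trans (min_le_left _ _) (le_trans (min_le_right _ _) (min_le_right _ _))) hXlow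
          · -- far: |m| ≥ 3
            have habs1 : (3/2:ℝ) ≤ |x₁| := by
              rw [hx1v, abs_div, show |(2:ℝ)| = 2 by norm_num, le_div_iff₀ (by norm_num)]
              have hm3R : (3:ℝ) ≤ |(m:ℝ)| := by
                rcases hm with h | h
                · rw [abs_of_nonneg (by exact_mod_cast (by omega : (0:ℤ) ≤ m) : (0:ℝ) ≤ (m:ℝ))]
                  exact_mod_cast h
                · rw [abs_of_nonpos (by exact_mod_cast (by omega : m ≤ (0:ℤ)) : (m:ℝ) ≤ 0)]
                  have h2 : (m:ℝ) ≤ -3 := by exact_mod_cast h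
                  linarith
              linarith
            have hrep : ((w:ℂ) - p).re = w.re - x₁ := by
              rw [hpdef]
              simp [Complex.sub_re, Complex.add_re, Complex.mul_re, UpperHalfPlane.coe_re]
            have hlow : (1/2:ℝ) ≤ ‖(w:ℂ) - p‖ := by
              have h := Complex.abs_re_le_norm ((w:ℂ) - p)
              rw [hrep] at h
              have h2 := abs_sub_abs_le_abs_sub x₁ w.re
              rw [abs_sub_comm] at h2
              linarith
            have hMs : (3/20:ℝ)*M ≤ 1/4 := by linarith
            linarith
    · -- hyperbolic / parabolic case
      have ht4 : (4:ℤ) ≤ (aZ + dZ)^2 := by linarith [hell, (by omega : ¬ (aZ+dZ)^2 ≤ 3 → 4 ≤ (aZ+dZ)^2)]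
      have ht4R : (4:ℝ) ≤ ((aZ:ℝ) + dZ)^2 := by exact_mod_cast ht4
      set s := Real.sqrt (((aZ:ℝ) + dZ)^2 - 4) with hsdef
      have hs2 : s^2 = ((aZ:ℝ)+dZ)^2 - 4 := Real.sq_sqrt (by linarith)
      clear_value s
      set r₁ := (((aZ:ℝ) - dZ) + s) / (2*cZ) with hr1
      set r₂ := (((aZ:ℝ) - dZ) - s) / (2*cZ) with hr2
      clear_value r₁ r₂
      have hx : (cZ:ℝ)*(r₁+r₂) = (aZ:ℝ) - dZ := by
        rw [hr1, hr2]; field_simp; ring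
      have hy : (cZ:ℝ)*(r₁*r₂) = -(bZ:ℝ) := by
        rw [hr1, hr2]; field_simp
        linear_combination (-1) * hs2 - 4 * hdetR
      have hfac := msp_factor_quad_real aZ bZ cZ dZ hx hy (w:ℂ)
      rw [← hPdef] at hfac
      have hb1 := himle r₁
      have hb2 := himle r₂
      have hPabs : w.im^2 ≤ ‖P‖ := by
        rw [hfac, norm_mul, norm_mul, Complex.norm_intCast]
        calc w.im^2 = w.im * w.im := sq w.im
          _ ≤ ‖(w:ℂ) - (r₁:ℂ)‖ * ‖(w:ℂ) - (r₂:ℂ)‖ :=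
              mul_le_mul hb1 hb2 w.im_pos.le (norm_nonneg _)
          _ ≤ |(cZ:ℝ)| * (‖(w:ℂ) - (r₁:ℂ)‖ * ‖(w:ℂ) - (r₂:ℂ)‖) :=
              le_mul_of_one_le_left (by positivity) hcabs
          _ = |(cZ:ℝ)| * ‖(w:ℂ) - (r₁:ℂ)‖ * ‖(w:ℂ) - (r₂:ℂ)‖ := by ring
      have hXge : w.im/2 ≤ X := by
        rw [hXdef, le_div_iff₀ (by positivity)]
        calc w.im/2*(2*w.im) = w.im^2 := by ring
          _ ≤ ‖P‖ := hPabs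
      have hs1 : (3/20:ℝ)*M ≤ (3/20)*(1/w.im) := by linarith
      have hs2' : (3/20:ℝ)*(1/w.im) ≤ w.im/2 := by
        rw [show (3/20:ℝ)*(1/w.im) = 3/(20*w.im) by ring,
          div_le_div_iff₀ (by positivity) (by norm_num)]
        nlinarith [h34, w.im_pos]
      linarith
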